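/- Let a, b ∈ ℝ^d be distinct, let μ = (1/2)δ_a + (1/2)δ_b, and let μ̂_N be the empirical measure of N i.i.d. μ-distributed random variables. Then for every p ≥ 1, E[ρ_p^p(μ, μ̂_N)]^{1/p} = ‖a − b‖ · E[ |μ̂_N({a}) − 1/2| ]^{1/p}, and consequently there exist constants 0 < c ≤ C < ∞ such that c · N^{−1/(2p)} ≤ E[ρ_p^p(μ, μ̂_N)]^{1/p} ≤ C · N^{−1/(2p)} for all N ≥ 1. -/

import Mathlib

open MeasureTheory ENNReal

/-- The set of couplings (transports) between two measures on `ℝ^d`. -/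
def couplings {d : ℕ} (μ ν : Measure (Fin d → ℝ)) :
    Set (Measure ((Fin d → ℝ) × (Fin d → ℝ))) :=
  {ξ | ξ.map Prod.fst = μ ∧ ξ.map Prod.snd = ν}

/-- `ρ_p^p(μ,ν)`: the `p`-th power of the `p`-th Wasserstein metric. -/
noncomputable def WpPow {d : ℕ} (p : ℝ) (μ ν : Measure (Fin d → ℝ)) : ℝ≥0∞ :=
  ⨅ ξ ∈ couplings μ ν, ∫⁻ z, (‖z.1 - z.2‖₊ : ℝ≥0∞) ^ p ∂ξ

/-- The empirical measure `(1/N) ∑_{j<N} δ_{x_j}` of a vector of `N` points. -/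
noncomputable def empMeas {d : ℕ} (N : ℕ) (x : Fin N → (Fin d → ℝ)) :
    Measure (Fin d → ℝ) :=
  (N : ℝ≥0∞)⁻¹ • ∑ j, Measure.dirac (x j)

/-- `E[ρ_p^p(μ, μ̂_N)]`: the expected `p`-th power Wasserstein distance between `μ`
and the empirical measure of `N` i.i.d. `μ`-distributed samples (modelled on the
canonical product space). -/
noncomputable def expWpPow {d : ℕ} (p : ℝ) (μ : Measure (Fin d → ℝ)) (N : ℕ) :
    ℝ≥0∞ :=
  ∫⁻ x, WpPow p μ (empMeas N x) ∂(Measure.pi fun _ : Fin N => μ)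

/-- The unit cube `[0,1)^d`. -/
def unitBox (d : ℕ) : Set (Fin d → ℝ) := Set.univ.pi fun _ => Set.Ico (0 : ℝ) 1

open Finset

variable {d : ℕ} (a b : Fin d → ℝ)

noncomputable def twoPt (a b : Fin d → ℝ) : Measure (Fin d → ℝ) :=
  (2 : ℝ≥0∞)⁻¹ • (Measure.dirac a + Measure.dirac b)

/-- the sample point vector associated to a sign vector -/
def Xs (a b : Fin d → ℝ) {N : ℕ} (s : Fin N → Bool) : Fin N → (Fin d → ℝ) :=
  fun j => if s j then a else b

instance twoPt_prob : IsProbabilityMeasure (twoPt a b) := by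
  constructor
  simp [twoPt]
  rw [← two_mul, ENNReal.mul_inv_cancel] <;> norm_num

lemma twoPt_apply (t : Set (Fin d → ℝ)) :
    twoPt a b t = 2⁻¹ * (t.indicator 1 a + t.indicator 1 b) := by
  simp [twoPt, Measure.dirac_apply, mul_add]

lemma indicator_pi {N : ℕ} (t : Fin N → Set (Fin d → ℝ)) (x : Fin N → (Fin d → ℝ)) :
    (Set.pi Set.univ t).indicator (1 : (Fin N → (Fin d → ℝ)) → ℝ≥0∞) x
      = ∏ i, (t i).indicator 1 (x i) := by
  by_cases h : x ∈ Set.pi Set.univ t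
  · rw [Set.indicator_of_mem h, Finset.prod_eq_one]
    · rfl
    · intro i _
      rw [Set.indicator_of_mem (h i (Set.mem_univ i))]; rfl
  · rw [Set.indicator_of_notMem h]
    rw [Set.mem_univ_pi] at h
    push_neg at h
    obtain ⟨i, hi⟩ := h
    exact (Finset.prod_eq_zero (Finset.mem_univ i)
      (by rw [Set.indicator_of_notMem hi])).symm

lemma pi_twoPt (N : ℕ) :
    (Measure.pi fun _ : Fin N => twoPt a b)
      = ((2:ℝ≥0∞) ^ N)⁻¹ • ∑ s : Fin N → Bool, Measure.dirac (Xs a b s) := by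
  refine Measure.pi_eq fun t ht => ?_
  rw [Measure.smul_apply, smul_eq_mul]
  rw [Measure.coe_finset_sum]
  simp only [Finset.sum_apply, Measure.dirac_apply]
  have : ∀ s : Fin N → Bool,
      (Set.pi Set.univ t).indicator (1 : (Fin N → (Fin d → ℝ)) → ℝ≥0∞) (Xs a b s)
        = ∏ i, (t i).indicator 1 ((if s i then a else b)) := by
    intro s; rw [indicator_pi]; rfl
  simp_rw [this]
  rw [← Fintype.prod_sum
    (fun (i : Fin N) (v : Bool) => (t i).indicator (1 : (Fin d → ℝ) → ℝ≥0∞) (if v then a else b))]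
  simp only [Fintype.sum_bool, Bool.false_eq_true, if_true, if_false]
  have hmu : ∀ i, twoPt a b (t i)
      = 2⁻¹ * ((t i).indicator 1 a + (t i).indicator 1 b) := fun i => twoPt_apply a b (t i)
  simp_rw [hmu]
  rw [Finset.prod_mul_distrib, Finset.prod_const, card_univ, Fintype.card_fin,
    ← ENNReal.inv_pow]


section Emp
variable {d : ℕ} (a b : Fin d → ℝ) {N : ℕ} (s : Fin N → Bool)

/-- number of `true`s -/
def kcnt {N : ℕ} (s : Fin N → Bool) : ℕ := (Finset.univ.filter fun j => s j = true).card

lemma kcnt_le : kcnt s ≤ N := by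
  simpa [kcnt] using Finset.card_filter_le Finset.univ (fun j => s j = true)

lemma sum_dirac_Xs :
    ∑ j, Measure.dirac (Xs a b s j)
      = (kcnt s : ℝ≥0∞) • Measure.dirac a + ((N - kcnt s : ℕ) : ℝ≥0∞) • Measure.dirac b := by
  classical
  rw [← Finset.sum_filter_add_sum_filter_not Finset.univ (fun j => s j = true)]
  have h1 : ∀ j ∈ Finset.univ.filter (fun j => s j = true),
      Measure.dirac (Xs a b s j) = Measure.dirac a := by
    intro j hj; simp only [Finset.mem_filter] at hj; simp [Xs, hj.2]
  have h2 : ∀ j ∈ Finset.univ.filter (fun j => ¬ s j = true),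
      Measure.dirac (Xs a b s j) = Measure.dirac b := by
    intro j hj; simp only [Finset.mem_filter] at hj; simp [Xs, hj.2]
  rw [Finset.sum_congr rfl h1, Finset.sum_congr rfl h2, Finset.sum_const, Finset.sum_const]
  congr 1
  · rw [← kcnt]; exact (Nat.cast_smul_eq_nsmul ℝ≥0∞ _ _).symm
  · have hcard : (Finset.univ.filter fun j => s j = true).card
        + (Finset.univ.filter fun j => ¬ s j = true).card = N := by
      simpa using Finset.card_filter_add_card_filter_not
        (s := (Finset.univ : Finset (Fin N))) (p := fun j : Fin N => s j = true)
    have h : (Finset.univ.filter fun j => ¬ s j = true).card = N - kcnt s := by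
      unfold kcnt; omega
    rw [h]; exact (Nat.cast_smul_eq_nsmul ℝ≥0∞ _ _).symm

lemma empMeas_Xs :
    empMeas N (Xs a b s)
      = (N : ℝ≥0∞)⁻¹ • ((kcnt s : ℝ≥0∞) • Measure.dirac a
        + ((N - kcnt s : ℕ) : ℝ≥0∞) • Measure.dirac b) := by
  rw [empMeas, sum_dirac_Xs]

lemma empMeas_Xs_a (hab : a ≠ b) (hN : 1 ≤ N) :
    empMeas N (Xs a b s) {a} = (N : ℝ≥0∞)⁻¹ * (kcnt s) := by
  rw [empMeas_Xs]
  simp [Measure.dirac_apply, Set.indicator_apply, Ne.symm hab]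

lemma empMeas_Xs_a_toReal (hab : a ≠ b) (hN : 1 ≤ N) :
    (empMeas N (Xs a b s) {a}).toReal = (kcnt s : ℝ) / N := by
  rw [empMeas_Xs_a a b s hab hN]
  rw [ENNReal.toReal_mul]
  simp [div_eq_mul_inv, mul_comm]

lemma empMeas_Xs_compl :
    empMeas N (Xs a b s) ({a, b}ᶜ) = 0 := by
  rw [empMeas_Xs]
  simp [Measure.dirac_apply, Set.indicator_apply]

end Emp

section Coupling
variable {d : ℕ}

noncomputable def tripleM (w1 w2 w3 : ℝ≥0∞) (x1 y1 x2 y2 x3 y3 : Fin d → ℝ) :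
    Measure ((Fin d → ℝ) × (Fin d → ℝ)) :=
  w1 • Measure.dirac (x1, y1) + w2 • Measure.dirac (x2, y2) + w3 • Measure.dirac (x3, y3)

lemma tripleM_map_fst (w1 w2 w3 : ℝ≥0∞) (x1 y1 x2 y2 x3 y3 : Fin d → ℝ) :
    (tripleM w1 w2 w3 x1 y1 x2 y2 x3 y3).map Prod.fst
      = w1 • Measure.dirac x1 + w2 • Measure.dirac x2 + w3 • Measure.dirac x3 := by
  simp [tripleM, Measure.map_add, Measure.map_smul, Measure.map_dirac, measurable_fst]

lemma tripleM_map_snd (w1 w2 w3 : ℝ≥0∞) (x1 y1 x2 y2 x3 y3 : Fin d → ℝ) :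
    (tripleM w1 w2 w3 x1 y1 x2 y2 x3 y3).map Prod.snd
      = w1 • Measure.dirac y1 + w2 • Measure.dirac y2 + w3 • Measure.dirac y3 := by
  simp [tripleM, Measure.map_add, Measure.map_smul, Measure.map_dirac, measurable_snd]

lemma tripleM_lintegral (w1 w2 w3 : ℝ≥0∞) (x1 y1 x2 y2 x3 y3 : Fin d → ℝ)
    (f : (Fin d → ℝ) × (Fin d → ℝ) → ℝ≥0∞) :
    ∫⁻ z, f z ∂(tripleM w1 w2 w3 x1 y1 x2 y2 x3 y3)
      = w1 * f (x1, y1) + w2 * f (x2, y2) + w3 * f (x3, y3) := by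
  simp [tripleM, lintegral_add_measure, lintegral_smul_measure, lintegral_dirac]

end Coupling

section Wp
variable {d : ℕ} (a b : Fin d → ℝ) {N : ℕ} (s : Fin N → Bool) (p : ℝ)

/-- the excess count `|2k - N|` as a natural number -/
def mExc {N : ℕ} (s : Fin N → Bool) : ℕ := (N - 2 * kcnt s) + (2 * kcnt s - N)

lemma inv_2N (hN : 1 ≤ N) : ((2:ℝ≥0∞) * N)⁻¹ = 2⁻¹ * (N:ℝ≥0∞)⁻¹ :=
  ENNReal.mul_inv (Or.inl two_ne_zero) (Or.inl ENNReal.ofNat_ne_top)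

lemma inv_2N_mul_N (hN : 1 ≤ N) : ((2:ℝ≥0∞) * N)⁻¹ * (N:ℝ≥0∞) = 2⁻¹ := by
  rw [inv_2N hN, mul_assoc, ENNReal.inv_mul_cancel
    (Nat.cast_ne_zero.mpr (by omega)) (ENNReal.natCast_ne_top N), mul_one]

lemma inv_2N_mul_two (hN : 1 ≤ N) (x : ℝ≥0∞) :
    ((2:ℝ≥0∞) * N)⁻¹ * (2 * x) = (N:ℝ≥0∞)⁻¹ * x := by
  rw [inv_2N hN]
  calc 2⁻¹ * (N:ℝ≥0∞)⁻¹ * (2 * x) = (2⁻¹ * 2) * ((N:ℝ≥0∞)⁻¹ * x) := by ring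
    _ = (N:ℝ≥0∞)⁻¹ * x := by
        rw [ENNReal.inv_mul_cancel two_ne_zero ENNReal.ofNat_ne_top, one_mul]

lemma cost_self (p : ℝ) (hp : 1 ≤ p) (x : Fin d → ℝ) :
    (‖x - x‖₊ : ℝ≥0∞) ^ p = 0 := by
  rw [sub_self]
  simp only [nnnorm_zero, ENNReal.coe_zero]
  exact ENNReal.zero_rpow_of_pos (lt_of_lt_of_le one_pos hp)

lemma cost_rev (p : ℝ) :
    (‖b - a‖₊ : ℝ≥0∞) ^ p = (‖a - b‖₊ : ℝ≥0∞) ^ p := by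
  rw [← neg_sub a b, nnnorm_neg]

lemma WpPow_le (hp : 1 ≤ p) (hN : 1 ≤ N) :
    WpPow p (twoPt a b) (empMeas N (Xs a b s))
      ≤ ((2:ℝ≥0∞) * N)⁻¹ * (mExc s) * (‖a - b‖₊ : ℝ≥0∞) ^ p := by
  set k := kcnt s with hkdef
  have hk : k ≤ N := kcnt_le s
  have hemp : empMeas N (Xs a b s)
      = ((N:ℝ≥0∞)⁻¹ * k) • Measure.dirac a
        + ((N:ℝ≥0∞)⁻¹ * ((N - k : ℕ):ℝ≥0∞)) • Measure.dirac b := by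
    rw [empMeas_Xs, smul_add, smul_smul, smul_smul]
  by_cases h2k : 2 * k ≤ N
  · set c1 : ℝ≥0∞ := ((2:ℝ≥0∞) * N)⁻¹ * ((2 * k : ℕ):ℝ≥0∞) with hc1
    set c2 : ℝ≥0∞ := ((2:ℝ≥0∞) * N)⁻¹ * ((N - 2 * k : ℕ):ℝ≥0∞) with hc2
    set c3 : ℝ≥0∞ := ((2:ℝ≥0∞) * N)⁻¹ * ((N : ℕ):ℝ≥0∞) with hc3
    have hmem : tripleM c1 c2 c3 a a a b b b ∈
        couplings (twoPt a b) (empMeas N (Xs a b s)) := by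
      constructor
      · rw [tripleM_map_fst]
        have h12 : c1 + c2 = 2⁻¹ := by
          rw [hc1, hc2, ← mul_add, ← Nat.cast_add,
            show (2 * k + (N - 2 * k) : ℕ) = N from by omega]
          exact inv_2N_mul_N hN
        have h3 : c3 = 2⁻¹ := inv_2N_mul_N hN
        rw [← add_smul, h12, h3, twoPt, smul_add]
      · rw [tripleM_map_snd, hemp]
        have h1 : c1 = (N:ℝ≥0∞)⁻¹ * k := by
          rw [hc1, Nat.cast_mul, Nat.cast_ofNat]
          exact inv_2N_mul_two hN _
        have h23 : c2 + c3 = (N:ℝ≥0∞)⁻¹ * ((N - k : ℕ):ℝ≥0∞) := by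
          rw [hc2, hc3, ← mul_add, ← Nat.cast_add,
            show ((N - 2 * k) + N : ℕ) = 2 * (N - k) from by omega,
            Nat.cast_mul, Nat.cast_ofNat, inv_2N_mul_two hN]
        rw [add_assoc, ← add_smul, h1, h23]
    refine le_trans (iInf₂_le _ hmem) ?_
    rw [tripleM_lintegral]
    simp only [cost_self p hp]
    rw [mul_zero, mul_zero, zero_add, add_zero]
    have hm : (mExc s : ℝ≥0∞) = ((N - 2 * k : ℕ):ℝ≥0∞) := by
      norm_cast
      unfold mExc
      omega
    rw [hm, hc2, mul_assoc]
  · push_neg at h2k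
    set c1 : ℝ≥0∞ := ((2:ℝ≥0∞) * N)⁻¹ * ((N : ℕ):ℝ≥0∞) with hc1
    set c2 : ℝ≥0∞ := ((2:ℝ≥0∞) * N)⁻¹ * ((2 * k - N : ℕ):ℝ≥0∞) with hc2
    set c3 : ℝ≥0∞ := ((2:ℝ≥0∞) * N)⁻¹ * ((2 * (N - k) : ℕ):ℝ≥0∞) with hc3
    have hmem : tripleM c1 c2 c3 a a b a b b ∈
        couplings (twoPt a b) (empMeas N (Xs a b s)) := by
      constructor
      · rw [tripleM_map_fst]
        have h1 : c1 = 2⁻¹ := inv_2N_mul_N hN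
        have h23 : c2 + c3 = 2⁻¹ := by
          rw [hc2, hc3, ← mul_add, ← Nat.cast_add,
            show ((2 * k - N) + 2 * (N - k) : ℕ) = N from by omega]
          exact inv_2N_mul_N hN
        rw [add_assoc, ← add_smul, h1, h23, twoPt, smul_add]
      · rw [tripleM_map_snd, hemp]
        have h12 : c1 + c2 = (N:ℝ≥0∞)⁻¹ * k := by
          rw [hc1, hc2, ← mul_add, ← Nat.cast_add,
            show (N + (2 * k - N) : ℕ) = 2 * k from by omega,
            Nat.cast_mul, Nat.cast_ofNat, inv_2N_mul_two hN]
        have h3 : c3 = (N:ℝ≥0∞)⁻¹ * ((N - k : ℕ):ℝ≥0∞) := by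
          rw [hc3, Nat.cast_mul, Nat.cast_ofNat]
          exact inv_2N_mul_two hN _
        rw [← add_smul, h12, h3]
    refine le_trans (iInf₂_le _ hmem) ?_
    rw [tripleM_lintegral]
    simp only [cost_self p hp]
    rw [mul_zero, mul_zero, zero_add, add_zero]
    have hm : (mExc s : ℝ≥0∞) = ((2 * k - N : ℕ):ℝ≥0∞) := by
      norm_cast
      unfold mExc
      omega
    rw [show ((b, a) : (Fin d → ℝ) × (Fin d → ℝ)).1 - ((b, a) : (Fin d → ℝ) × (Fin d → ℝ)).2
        = b - a from rfl, cost_rev a b p, hm, hc2, mul_assoc]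

end Wp

section Lower
variable {d : ℕ} (a b : Fin d → ℝ) {N : ℕ} (s : Fin N → Bool) (p : ℝ)

lemma le_WpPow (hab : a ≠ b) (hp : 1 ≤ p) (hN : 1 ≤ N) :
    ((2:ℝ≥0∞) * N)⁻¹ * (mExc s) * (‖a - b‖₊ : ℝ≥0∞) ^ p
      ≤ WpPow p (twoPt a b) (empMeas N (Xs a b s)) := by
  set k := kcnt s with hkdef
  have hk : k ≤ N := kcnt_le s
  refine le_iInf₂ fun ξ hξ => ?_
  obtain ⟨hfst, hsnd⟩ := hξ
  have hma : MeasurableSet ({a} : Set (Fin d → ℝ)) := measurableSet_singleton a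
  have hmb : MeasurableSet ({b} : Set (Fin d → ℝ)) := measurableSet_singleton b
  have hmab : MeasurableSet ({a, b} : Set (Fin d → ℝ)) := by
    rw [show ({a, b} : Set (Fin d → ℝ)) = {a} ∪ {b} from rfl]
    exact hma.union hmb
  -- marginal values
  have hfst_app : ∀ t : Set (Fin d → ℝ), MeasurableSet t → ξ (t ×ˢ Set.univ) = twoPt a b t := by
    intro t ht
    rw [← hfst, Measure.map_apply measurable_fst ht]
    congr 1
    ext z
    simp [Set.mem_prod]
  have hsnd_app : ∀ t : Set (Fin d → ℝ), MeasurableSet t →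
      ξ (Set.univ ×ˢ t) = empMeas N (Xs a b s) t := by
    intro t ht
    rw [← hsnd, Measure.map_apply measurable_snd ht]
    congr 1
    ext z
    simp [Set.mem_prod]
  have hξa : ξ ({a} ×ˢ Set.univ) = 2⁻¹ := by
    rw [hfst_app {a} hma, twoPt_apply]
    simp [Set.indicator_apply, Ne.symm hab]
  have hξ2a : ξ (Set.univ ×ˢ {a}) = (N:ℝ≥0∞)⁻¹ * k := by
    rw [hsnd_app {a} hma]
    exact empMeas_Xs_a a b s hab hN
  have hξcompl2 : ξ (Set.univ ×ˢ ({a, b}ᶜ)) = 0 := by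
    rw [hsnd_app _ hmab.compl]
    exact empMeas_Xs_compl a b s
  have hξcompl1 : ξ (({a, b}ᶜ) ×ˢ Set.univ) = 0 := by
    rw [hfst_app _ hmab.compl, twoPt_apply]
    simp [Set.indicator_apply]
  have hkfin : (N:ℝ≥0∞)⁻¹ * (k:ℝ≥0∞) ≠ ⊤ :=
    ENNReal.mul_ne_top (ENNReal.inv_ne_top.mpr (Nat.cast_ne_zero.mpr (by omega)))
      (ENNReal.natCast_ne_top k)
  by_cases h2k : 2 * k ≤ N
  · -- S = {a} ×ˢ {b}, ξ S ≥ 1/2 - k/N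
    set S : Set ((Fin d → ℝ) × (Fin d → ℝ)) := {a} ×ˢ {b} with hS
    have hmS : MeasurableSet S := hma.prod hmb
    have hsub1 : ({a} : Set (Fin d → ℝ)) ×ˢ Set.univ ⊆ S ∪ ({a} ×ˢ ({b}ᶜ)) := by
      rintro ⟨z1, z2⟩ ⟨hz1, -⟩
      by_cases h : z2 ∈ ({b} : Set (Fin d → ℝ))
      · exact Or.inl ⟨hz1, h⟩
      · exact Or.inr ⟨hz1, h⟩
    have hsub2 : ({a} : Set (Fin d → ℝ)) ×ˢ ({b}ᶜ) ⊆
        (Set.univ ×ˢ ({a} : Set (Fin d → ℝ))) ∪ (Set.univ ×ˢ ({a, b}ᶜ)) := by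
      rintro ⟨z1, z2⟩ ⟨hz1, hz2⟩
      by_cases h : z2 = a
      · exact Or.inl ⟨trivial, h⟩
      · refine Or.inr ⟨trivial, ?_⟩
        simp only [Set.mem_compl_iff, Set.mem_insert_iff, Set.mem_singleton_iff]
        push_neg
        exact ⟨h, hz2⟩
    have hstep : 2⁻¹ ≤ ξ S + (N:ℝ≥0∞)⁻¹ * k := by
      calc (2⁻¹ : ℝ≥0∞) = ξ ({a} ×ˢ Set.univ) := hξa.symm
        _ ≤ ξ (S ∪ ({a} ×ˢ ({b}ᶜ))) := measure_mono hsub1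
        _ ≤ ξ S + ξ ({a} ×ˢ ({b}ᶜ)) := measure_union_le _ _
        _ ≤ ξ S + (ξ (Set.univ ×ˢ ({a} : Set (Fin d → ℝ)))
              + ξ (Set.univ ×ˢ ({a, b}ᶜ))) := by
            gcongr
            exact le_trans (measure_mono hsub2) (measure_union_le _ _)
        _ = ξ S + (N:ℝ≥0∞)⁻¹ * k := by rw [hξ2a, hξcompl2, add_zero]
    have hXadd : ((2:ℝ≥0∞) * N)⁻¹ * ((mExc s : ℕ):ℝ≥0∞) + (N:ℝ≥0∞)⁻¹ * k = 2⁻¹ := by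
      have hm : ((mExc s : ℕ):ℝ≥0∞) = ((N - 2 * k : ℕ):ℝ≥0∞) := by
        norm_cast; unfold mExc; omega
      rw [hm, show (N:ℝ≥0∞)⁻¹ * k = ((2:ℝ≥0∞) * N)⁻¹ * ((2 * k : ℕ):ℝ≥0∞) from by
        rw [Nat.cast_mul, Nat.cast_ofNat]; exact (inv_2N_mul_two hN _).symm]
      rw [← mul_add, ← Nat.cast_add, show ((N - 2 * k) + 2 * k : ℕ) = N from by omega]
      exact inv_2N_mul_N hN
    have hXle : ((2:ℝ≥0∞) * N)⁻¹ * ((mExc s : ℕ):ℝ≥0∞) ≤ ξ S := by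
      have := hstep
      rw [← hXadd] at this
      exact (ENNReal.add_le_add_iff_right hkfin).mp this
    calc ((2:ℝ≥0∞) * N)⁻¹ * (mExc s) * (‖a - b‖₊ : ℝ≥0∞) ^ p
        ≤ ξ S * (‖a - b‖₊ : ℝ≥0∞) ^ p := by gcongr
      _ = (‖a - b‖₊ : ℝ≥0∞) ^ p * ξ S := mul_comm _ _
      _ = ∫⁻ z in S, (‖z.1 - z.2‖₊ : ℝ≥0∞) ^ p ∂ξ := by
          rw [← setLIntegral_const S _]
          refine (setLIntegral_congr_fun hmS ?_).symm
          rintro ⟨z1, z2⟩ ⟨hz1, hz2⟩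
          simp only [Set.mem_singleton_iff] at hz1 hz2
          rw [hz1, hz2]
      _ ≤ ∫⁻ z, (‖z.1 - z.2‖₊ : ℝ≥0∞) ^ p ∂ξ := setLIntegral_le_lintegral _ _
  · push_neg at h2k
    set S : Set ((Fin d → ℝ) × (Fin d → ℝ)) := {b} ×ˢ {a} with hS
    have hmS : MeasurableSet S := hmb.prod hma
    have hsub1 : (Set.univ : Set (Fin d → ℝ)) ×ˢ ({a} : Set (Fin d → ℝ))
        ⊆ S ∪ (({b}ᶜ) ×ˢ ({a} : Set (Fin d → ℝ))) := by
      rintro ⟨z1, z2⟩ ⟨-, hz2⟩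
      by_cases h : z1 ∈ ({b} : Set (Fin d → ℝ))
      · exact Or.inl ⟨h, hz2⟩
      · exact Or.inr ⟨h, hz2⟩
    have hsub2 : (({b}ᶜ) : Set (Fin d → ℝ)) ×ˢ ({a} : Set (Fin d → ℝ)) ⊆
        (({a} : Set (Fin d → ℝ)) ×ˢ Set.univ) ∪ (({a, b}ᶜ) ×ˢ Set.univ) := by
      rintro ⟨z1, z2⟩ ⟨hz1, hz2⟩
      by_cases h : z1 = a
      · exact Or.inl ⟨h, trivial⟩
      · refine Or.inr ⟨?_, trivial⟩
        simp only [Set.mem_compl_iff, Set.mem_insert_iff, Set.mem_singleton_iff]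
        push_neg
        exact ⟨h, hz1⟩
    have hstep : (N:ℝ≥0∞)⁻¹ * k ≤ ξ S + 2⁻¹ := by
      calc (N:ℝ≥0∞)⁻¹ * k = ξ (Set.univ ×ˢ {a}) := hξ2a.symm
        _ ≤ ξ (S ∪ (({b}ᶜ) ×ˢ ({a} : Set (Fin d → ℝ)))) := measure_mono hsub1
        _ ≤ ξ S + ξ (({b}ᶜ) ×ˢ ({a} : Set (Fin d → ℝ))) := measure_union_le _ _
        _ ≤ ξ S + (ξ (({a} : Set (Fin d → ℝ)) ×ˢ Set.univ)
              + ξ (({a, b}ᶜ) ×ˢ Set.univ)) := by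
            gcongr
            exact le_trans (measure_mono hsub2) (measure_union_le _ _)
        _ = ξ S + 2⁻¹ := by rw [hξa, hξcompl1, add_zero]
    have hXadd : ((2:ℝ≥0∞) * N)⁻¹ * ((mExc s : ℕ):ℝ≥0∞) + 2⁻¹ = (N:ℝ≥0∞)⁻¹ * k := by
      have hm : ((mExc s : ℕ):ℝ≥0∞) = ((2 * k - N : ℕ):ℝ≥0∞) := by
        norm_cast; unfold mExc; omega
      rw [hm, show (2⁻¹ : ℝ≥0∞) = ((2:ℝ≥0∞) * N)⁻¹ * ((N : ℕ):ℝ≥0∞) from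
        (inv_2N_mul_N hN).symm]
      rw [← mul_add, ← Nat.cast_add, show ((2 * k - N) + N : ℕ) = 2 * k from by omega,
        Nat.cast_mul, Nat.cast_ofNat]
      exact inv_2N_mul_two hN _
    have hXle : ((2:ℝ≥0∞) * N)⁻¹ * ((mExc s : ℕ):ℝ≥0∞) ≤ ξ S := by
      have := hstep
      rw [← hXadd] at this
      exact (ENNReal.add_le_add_iff_right (by norm_num)).mp this
    calc ((2:ℝ≥0∞) * N)⁻¹ * (mExc s) * (‖a - b‖₊ : ℝ≥0∞) ^ p
        ≤ ξ S * (‖a - b‖₊ : ℝ≥0∞) ^ p := by gcongr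
      _ = (‖a - b‖₊ : ℝ≥0∞) ^ p * ξ S := mul_comm _ _
      _ = ∫⁻ z in S, (‖z.1 - z.2‖₊ : ℝ≥0∞) ^ p ∂ξ := by
          rw [← setLIntegral_const S _]
          refine (setLIntegral_congr_fun hmS ?_).symm
          rintro ⟨z1, z2⟩ ⟨hz1, hz2⟩
          simp only [Set.mem_singleton_iff] at hz1 hz2
          rw [hz1, hz2]; exact cost_rev a b p
      _ ≤ ∫⁻ z, (‖z.1 - z.2‖₊ : ℝ≥0∞) ^ p ∂ξ := setLIntegral_le_lintegral _ _

lemma WpPow_eq (hab : a ≠ b) (hp : 1 ≤ p) (hN : 1 ≤ N) :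
    WpPow p (twoPt a b) (empMeas N (Xs a b s))
      = ((2:ℝ≥0∞) * N)⁻¹ * (mExc s) * (‖a - b‖₊ : ℝ≥0∞) ^ p :=
  le_antisymm (WpPow_le a b s p hp hN) (le_WpPow a b s p hab hp hN)

end Lower

section Bridge
open Finset
variable {d : ℕ} (a b : Fin d → ℝ) {N : ℕ} (s : Fin N → Bool)

noncomputable def epsB : Bool → ℝ := fun v => if v then 1 else -1

noncomputable def Ysum (n : ℕ) (s : Fin n → Bool) : ℝ := ∑ j, epsB (s j)

lemma Ysum_eq_kcnt (n : ℕ) (s : Fin n → Bool) :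
    Ysum n s = 2 * (kcnt s : ℝ) - n := by
  rw [Ysum, ← Finset.sum_filter_add_sum_filter_not Finset.univ (fun j => s j = true)]
  have h1 : ∀ j ∈ Finset.univ.filter (fun j => s j = true), epsB (s j) = 1 := by
    intro j hj; simp only [Finset.mem_filter] at hj; simp [epsB, hj.2]
  have h2 : ∀ j ∈ Finset.univ.filter (fun j => ¬ s j = true), epsB (s j) = -1 := by
    intro j hj; simp only [Finset.mem_filter] at hj; simp [epsB, hj.2]
  rw [Finset.sum_congr rfl h1, Finset.sum_congr rfl h2, Finset.sum_const, Finset.sum_const]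
  have hcard : (Finset.univ.filter fun j => s j = true).card
      + (Finset.univ.filter fun j => ¬ s j = true).card = n := by
    simpa using Finset.card_filter_add_card_filter_not
      (s := (Finset.univ : Finset (Fin n))) (p := fun j : Fin n => s j = true)
  have hk : (Finset.univ.filter fun j => s j = true).card = kcnt s := rfl
  have hnk : (Finset.univ.filter fun j => ¬ s j = true).card = n - kcnt s := by
    unfold kcnt; omega
  rw [hk, hnk]
  have hkn : kcnt s ≤ n := kcnt_le s
  have : ((n - kcnt s : ℕ):ℝ) = (n:ℝ) - kcnt s := by
    rw [Nat.cast_sub hkn]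
  simp only [nsmul_eq_mul, mul_one, mul_neg_one, this]
  ring

lemma mExc_cast : ((mExc s : ℕ) : ℝ) = |Ysum N s| := by
  rw [Ysum_eq_kcnt]
  have hk : kcnt s ≤ N := kcnt_le s
  unfold mExc
  rcases le_or_gt (2 * kcnt s) N with h | h
  · have h0 : 2 * kcnt s - N = 0 := by omega
    have hle : 2 * (kcnt s:ℝ) - N ≤ 0 := by
      have : ((2 * kcnt s : ℕ):ℝ) ≤ (N:ℝ) := by exact_mod_cast h
      push_cast at this; linarith
    rw [abs_of_nonpos hle, h0, Nat.add_zero, Nat.cast_sub h]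
    push_cast; ring
  · have h0 : N - 2 * kcnt s = 0 := by omega
    have hle : 0 ≤ 2 * (kcnt s:ℝ) - N := by
      have : (N:ℝ) ≤ ((2 * kcnt s : ℕ):ℝ) := by exact_mod_cast h.le
      push_cast at this; linarith
    rw [abs_of_nonneg hle, h0, Nat.zero_add, Nat.cast_sub h.le]
    push_cast; ring

end Bridge

section Bridge2
open Finset
variable {d : ℕ} (a b : Fin d → ℝ) {N : ℕ} (s : Fin N → Bool) (p : ℝ)

lemma coeff_eq_ofReal (hN : 1 ≤ N) :
    ((2:ℝ≥0∞) * N)⁻¹ * ((mExc s : ℕ):ℝ≥0∞) = ENNReal.ofReal (|Ysum N s| / (2 * N)) := by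
  have h2N : (0:ℝ) < 2 * N := by positivity
  rw [ENNReal.ofReal_div_of_pos h2N, ← mExc_cast, ENNReal.ofReal_natCast,
    show ((2:ℝ) * N) = ((2 * N : ℕ):ℝ) from by push_cast; ring, ENNReal.ofReal_natCast,
    div_eq_mul_inv, show ((2 * N : ℕ):ℝ≥0∞) = 2 * (N:ℝ≥0∞) from by push_cast; ring,
    mul_comm]

lemma lintegral_pi_twoPt (N : ℕ) (f : (Fin N → (Fin d → ℝ)) → ℝ≥0∞) :
    ∫⁻ x, f x ∂(Measure.pi fun _ : Fin N => twoPt a b)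
      = ((2:ℝ≥0∞) ^ N)⁻¹ * ∑ s : Fin N → Bool, f (Xs a b s) := by
  rw [pi_twoPt, lintegral_smul_measure, lintegral_finset_sum_measure]
  simp [lintegral_dirac]

lemma ofReal_sum_half (N : ℕ) :
    ((2:ℝ≥0∞) ^ N)⁻¹ * ∑ s : Fin N → Bool, ENNReal.ofReal (|Ysum N s| / (2 * N))
      = ENNReal.ofReal (((2:ℝ) ^ N)⁻¹ * ∑ s : Fin N → Bool, |Ysum N s| / (2 * N)) := by
  rw [← ENNReal.ofReal_sum_of_nonneg (fun s _ => by positivity)]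
  rw [ENNReal.ofReal_mul (by positivity)]
  congr 1
  rw [ENNReal.ofReal_inv_of_pos (by positivity), ENNReal.ofReal_pow (by norm_num)]
  norm_num

lemma expWpPow_eq (hab : a ≠ b) (hp : 1 ≤ p) (hN : 1 ≤ N) :
    expWpPow p (twoPt a b) N = (‖a - b‖₊ : ℝ≥0∞) ^ p
      * ENNReal.ofReal (((2:ℝ) ^ N)⁻¹ * ∑ s : Fin N → Bool, |Ysum N s| / (2 * N)) := by
  rw [expWpPow, lintegral_pi_twoPt]
  have hterm : ∀ s : Fin N → Bool, WpPow p (twoPt a b) (empMeas N (Xs a b s))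
      = (‖a - b‖₊ : ℝ≥0∞) ^ p * ENNReal.ofReal (|Ysum N s| / (2 * N)) := by
    intro s
    rw [WpPow_eq a b s p hab hp hN, coeff_eq_ofReal s hN, mul_comm]
  simp_rw [hterm]
  rw [← Finset.mul_sum, ← ofReal_sum_half]
  ring

lemma integrand_eq (hab : a ≠ b) (hN : 1 ≤ N) :
    (∫⁻ x : Fin N → (Fin d → ℝ), ENNReal.ofReal |(empMeas N x {a}).toReal - 1 / 2|
        ∂(Measure.pi fun _ : Fin N => twoPt a b))
      = ENNReal.ofReal (((2:ℝ) ^ N)⁻¹ * ∑ s : Fin N → Bool, |Ysum N s| / (2 * N)) := by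
  rw [lintegral_pi_twoPt]
  have hterm : ∀ s : Fin N → Bool,
      ENNReal.ofReal |(empMeas N (Xs a b s) {a}).toReal - 1 / 2|
        = ENNReal.ofReal (|Ysum N s| / (2 * N)) := by
    intro s
    rw [empMeas_Xs_a_toReal a b s hab hN]
    congr 1
    have hN0 : (N:ℝ) ≠ 0 := by positivity
    have h1 : (kcnt s:ℝ) / N - 1 / 2 = Ysum N s / (2 * N) := by
      rw [Ysum_eq_kcnt]
      field_simp
    rw [h1, abs_div, abs_of_pos (by positivity : (0:ℝ) < 2 * N)]
  simp_rw [hterm]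
  exact ofReal_sum_half N

end Bridge2

section Rate
open Finset
variable {d : ℕ} (a b : Fin d → ℝ)

noncomputable def RN (N : ℕ) : ℝ :=
  ((2:ℝ) ^ N)⁻¹ * ∑ s : Fin N → Bool, |Ysum N s| / (2 * N)

lemma RN_nonneg (N : ℕ) : 0 ≤ RN N := by
  unfold RN
  positivity

lemma RN_bounds (N : ℕ) (hN : 1 ≤ N)
    (hsum : (2:ℝ) ^ N * Real.sqrt N / Real.sqrt 3 ≤ ∑ s : Fin N → Bool, |Ysum N s| ∧
      (∑ s : Fin N → Bool, |Ysum N s|) ≤ 2 ^ N * Real.sqrt N) :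
    (2 * Real.sqrt 3)⁻¹ * ((N:ℝ) ^ (-(1:ℝ)/2)) ≤ RN N ∧
      RN N ≤ 2⁻¹ * ((N:ℝ) ^ (-(1:ℝ)/2)) := by
  have hN0 : (0:ℝ) < N := by exact_mod_cast hN
  have hs3 : (0:ℝ) < Real.sqrt 3 := Real.sqrt_pos.mpr (by norm_num)
  have hsN : (0:ℝ) < Real.sqrt N := Real.sqrt_pos.mpr hN0
  have h2N : (0:ℝ) < 2 ^ N := by positivity
  have hrw : RN N = (∑ s : Fin N → Bool, |Ysum N s|) / (2 ^ N * (2 * N)) := by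
    unfold RN
    rw [← Finset.sum_div]
    field_simp
  have hNrpow : (N:ℝ) ^ (-(1:ℝ)/2) = (Real.sqrt N)⁻¹ := by
    rw [show (-(1:ℝ)/2) = -(1/2 : ℝ) from by norm_num, Real.rpow_neg hN0.le,
      ← Real.sqrt_eq_rpow]
  have hinv : (Real.sqrt (N:ℝ))⁻¹ = Real.sqrt N / N := by
    rw [eq_div_iff hN0.ne']
    rw [show ((N:ℝ)) = Real.sqrt N * Real.sqrt N from (Real.mul_self_sqrt hN0.le).symm]
    field_simp
    rw [Real.sqrt_sq hsN.le]
  constructor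
  · rw [hrw, hNrpow, le_div_iff₀ (by positivity), hinv]
    calc (2 * Real.sqrt 3)⁻¹ * (Real.sqrt N / N) * (2 ^ N * (2 * N))
        = 2 ^ N * Real.sqrt N / Real.sqrt 3 := by
          field_simp
      _ ≤ _ := hsum.1
  · rw [hrw, hNrpow, div_le_iff₀ (by positivity), hinv]
    calc (∑ s : Fin N → Bool, |Ysum N s|) ≤ 2 ^ N * Real.sqrt N := hsum.2
      _ = 2⁻¹ * (Real.sqrt N / N) * (2 ^ N * (2 * N)) := by
          field_simp

end Rate

lemma epsB_sq (v : Bool) : epsB v ^ 2 = 1 := by cases v <;> simp [epsB]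

lemma sum_epsB : ∑ v : Bool, epsB v = 0 := by simp [epsB]

lemma sum_cons (n : ℕ) (F : (Fin (n+1) → Bool) → ℝ) :
    ∑ s : Fin (n+1) → Bool, F s = ∑ v : Bool, ∑ t : Fin n → Bool, F (Fin.cons v t) := by
  have h := (Fintype.sum_equiv (Fin.consEquiv fun _ => Bool)
    (fun x => F (Fin.cons x.1 x.2)) F fun x => rfl).symm
  rw [h, Fintype.sum_prod_type]

lemma Ysum_cons (n : ℕ) (v : Bool) (t : Fin n → Bool) :
    Ysum (n+1) (Fin.cons v t) = epsB v + Ysum n t := by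
  simp [Ysum, Fin.sum_univ_succ]

lemma mid_zero (n : ℕ) (G : (Fin n → Bool) → ℝ) :
    ∑ v : Bool, ∑ t : Fin n → Bool, G t * epsB v = 0 := by
  rw [Finset.sum_comm]
  simp [← Finset.mul_sum, epsB]

lemma sum_Ysum_sq (n : ℕ) :
    ∑ s : Fin n → Bool, (Ysum n s) ^ 2 = 2 ^ n * n := by
  induction n with
  | zero => simp [Ysum]
  | succ n ih =>
      rw [sum_cons n (fun s => (Ysum (n+1) s) ^ 2)]
      have h1 : ∀ v t, (Ysum (n+1) (Fin.cons v t)) ^ 2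
          = Ysum n t ^ 2 + (2 * Ysum n t) * epsB v + 1 := by
        intro v t; rw [Ysum_cons]; nlinarith [epsB_sq v]
      simp_rw [h1]
      simp only [Finset.sum_add_distrib, Finset.sum_const, card_univ, mid_zero n]
      simp only [Fintype.card_bool, Fintype.card_fun, Fintype.card_fin, ih]
      push_cast
      ring

lemma sum_Ysum_four (n : ℕ) :
    ∑ s : Fin n → Bool, (Ysum n s) ^ 4 = 2 ^ n * (3 * (n:ℝ) ^ 2 - 2 * n) := by
  induction n with
  | zero => simp [Ysum]
  | succ n ih =>
      rw [sum_cons n (fun s => (Ysum (n+1) s) ^ 4)]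
      have h1 : ∀ v t, (Ysum (n+1) (Fin.cons v t)) ^ 4
          = Ysum n t ^ 4 + 6 * Ysum n t ^ 2 + 1
            + (4 * Ysum n t ^ 3 + 4 * Ysum n t) * epsB v := by
        intro v t; rw [Ysum_cons]; cases v <;> simp [epsB] <;> ring
      simp_rw [h1]
      simp only [Finset.sum_add_distrib, mid_zero n, ← Finset.mul_sum, Finset.sum_const,
        card_univ, smul_eq_mul, Fintype.card_bool, Fintype.card_fun, Fintype.card_fin,
        ih, sum_Ysum_sq]
      push_cast
      ring

lemma le_of_sq_le_sq' {a b : ℝ} (ha : 0 ≤ a) (hb : 0 ≤ b) (h : a ^ 2 ≤ b ^ 2) :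
    a ≤ b := by
  calc a = Real.sqrt (a ^ 2) := (Real.sqrt_sq ha).symm
    _ ≤ Real.sqrt (b ^ 2) := Real.sqrt_le_sqrt h
    _ = b := Real.sqrt_sq hb

lemma sum_abs_Ysum_sq_le (n : ℕ) :
    (∑ s : Fin n → Bool, |Ysum n s|) ^ 2 ≤ 2 ^ n * (2 ^ n * n) := by
  have h := Finset.sum_mul_sq_le_sq_mul_sq Finset.univ (fun _ : Fin n → Bool => (1:ℝ))
    (fun s => |Ysum n s|)
  simp only [one_mul, one_pow, Finset.sum_const, card_univ, Fintype.card_fun,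
    Fintype.card_bool, Fintype.card_fin, smul_eq_mul, nsmul_eq_mul, mul_one, sq_abs] at h
  push_cast at h
  calc (∑ s : Fin n → Bool, |Ysum n s|) ^ 2
      ≤ (2:ℝ) ^ n * ∑ s : Fin n → Bool, Ysum n s ^ 2 := h
    _ = 2 ^ n * (2 ^ n * n) := by rw [sum_Ysum_sq]

lemma sum_abs_Ysum_bounds (n : ℕ) (hn : 1 ≤ n) :
    (2:ℝ) ^ n * Real.sqrt n / Real.sqrt 3 ≤ ∑ s : Fin n → Bool, |Ysum n s| ∧
    (∑ s : Fin n → Bool, |Ysum n s|) ≤ 2 ^ n * Real.sqrt n := by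
  set S1 := ∑ s : Fin n → Bool, |Ysum n s| with hS1
  have hS1nn : 0 ≤ S1 := Finset.sum_nonneg fun s _ => abs_nonneg _
  have hn0 : (0:ℝ) < n := by exact_mod_cast hn
  have hsq : Real.sqrt n ^ 2 = n := Real.sq_sqrt hn0.le
  have h3 : Real.sqrt 3 ^ 2 = 3 := Real.sq_sqrt (by norm_num)
  have h3pos : (0:ℝ) < Real.sqrt 3 := Real.sqrt_pos.mpr (by norm_num)
  have hsnn : 0 ≤ Real.sqrt (n:ℝ) := Real.sqrt_nonneg _
  have h2n : (0:ℝ) < 2 ^ n := by positivity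
  constructor
  · -- lower bound
    -- CS 1 : S2tot² ≤ S1 * S3
    have hcs1 := Finset.sum_mul_sq_le_sq_mul_sq Finset.univ
      (fun s : Fin n → Bool => Real.sqrt |Ysum n s|)
      (fun s => Real.sqrt |Ysum n s| * |Ysum n s|)
    have e1 : ∀ s : Fin n → Bool,
        Real.sqrt |Ysum n s| * (Real.sqrt |Ysum n s| * |Ysum n s|) = Ysum n s ^ 2 := by
      intro s
      rw [← mul_assoc, Real.mul_self_sqrt (abs_nonneg _), ← sq_abs]
      ring
    have e2 : ∀ s : Fin n → Bool, Real.sqrt |Ysum n s| ^ 2 = |Ysum n s| := fun s =>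
      Real.sq_sqrt (abs_nonneg _)
    have e3 : ∀ s : Fin n → Bool,
        (Real.sqrt |Ysum n s| * |Ysum n s|) ^ 2 = |Ysum n s| ^ 3 := by
      intro s
      rw [mul_pow, Real.sq_sqrt (abs_nonneg _)]
      ring
    simp_rw [e1, e2, e3] at hcs1
    -- CS 2 : S3² ≤ S2tot * S4tot
    have hcs2 := Finset.sum_mul_sq_le_sq_mul_sq Finset.univ
      (fun s : Fin n → Bool => |Ysum n s|) (fun s => Ysum n s ^ 2)
    have e4 : ∀ s : Fin n → Bool, |Ysum n s| * Ysum n s ^ 2 = |Ysum n s| ^ 3 := by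
      intro s
      rw [← sq_abs]
      ring
    have e5 : ∀ s : Fin n → Bool, (Ysum n s ^ 2) ^ 2 = Ysum n s ^ 4 := fun s => by ring
    simp_rw [e4, sq_abs, e5] at hcs2
    rw [sum_Ysum_sq, sum_Ysum_four] at *
    set S3 := ∑ s : Fin n → Bool, |Ysum n s| ^ 3 with hS3
    have hS3nn : 0 ≤ S3 := Finset.sum_nonneg fun s _ => by positivity
    -- combine: (2^n n)² ≤ S1 S3, S3² ≤ 2^n n · 2^n(3n²-2n)
    -- goal: 2^n √n / √3 ≤ S1
    rw [← hS1] at hcs1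
    set S2t : ℝ := 2 ^ n * n with hS2t
    have hS2tpos : 0 < S2t := by positivity
    have hA : S2t ^ 4 ≤ (S1 * S3) ^ 2 := by
      have := mul_self_le_mul_self (sq_nonneg S2t) hcs1
      calc S2t ^ 4 = S2t ^ 2 * S2t ^ 2 := by ring
        _ ≤ (S1 * S3) * (S1 * S3) := this
        _ = (S1 * S3) ^ 2 := by ring
    have hB : (S1 * S3) ^ 2 ≤ S1 ^ 2 * (S2t * (2 ^ n * (3 * (n:ℝ) ^ 2 - 2 * n))) := by
      have := mul_le_mul_of_nonneg_left hcs2 (sq_nonneg S1)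
      calc (S1 * S3) ^ 2 = S1 ^ 2 * S3 ^ 2 := by ring
        _ ≤ _ := this
    have hC : S2t ^ 4 ≤ S1 ^ 2 * (S2t * (2 ^ n * 3 * (n:ℝ) ^ 2)) := by
      refine (hA.trans hB).trans ?_
      have hX : (2:ℝ) ^ n * (3 * (n:ℝ) ^ 2 - 2 * n) ≤ 2 ^ n * 3 * (n:ℝ) ^ 2 := by nlinarith
      calc S1 ^ 2 * (S2t * (2 ^ n * (3 * (n:ℝ) ^ 2 - 2 * n)))
          = (S1 ^ 2 * S2t) * (2 ^ n * (3 * (n:ℝ) ^ 2 - 2 * n)) := by ring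
        _ ≤ (S1 ^ 2 * S2t) * (2 ^ n * 3 * (n:ℝ) ^ 2) :=
            mul_le_mul_of_nonneg_left hX (by positivity)
        _ = S1 ^ 2 * (S2t * (2 ^ n * 3 * (n:ℝ) ^ 2)) := by ring
    have hD : S2t ^ 3 ≤ S1 ^ 2 * (2 ^ n * 3 * (n:ℝ) ^ 2) := by
      have h' : S2t * S2t ^ 3 ≤ S2t * (S1 ^ 2 * (2 ^ n * 3 * (n:ℝ) ^ 2)) := by
        calc S2t * S2t ^ 3 = S2t ^ 4 := by ring
          _ ≤ S1 ^ 2 * (S2t * (2 ^ n * 3 * (n:ℝ) ^ 2)) := hC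
          _ = S2t * (S1 ^ 2 * (2 ^ n * 3 * (n:ℝ) ^ 2)) := by ring
      exact le_of_mul_le_mul_left h' hS2tpos
    have hE : ((2:ℝ) ^ n) ^ 2 * (n:ℝ) ≤ 3 * S1 ^ 2 := by
      have hpos : (0:ℝ) < 2 ^ n * (n:ℝ) ^ 2 := by positivity
      have h' : (2 ^ n * (n:ℝ) ^ 2) * (((2:ℝ) ^ n) ^ 2 * (n:ℝ)) ≤ (2 ^ n * (n:ℝ) ^ 2) * (3 * S1 ^ 2) := by
        calc (2 ^ n * (n:ℝ) ^ 2) * (((2:ℝ) ^ n) ^ 2 * (n:ℝ)) = S2t ^ 3 := by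
              rw [hS2t]; ring
          _ ≤ S1 ^ 2 * (2 ^ n * 3 * (n:ℝ) ^ 2) := hD
          _ = (2 ^ n * (n:ℝ) ^ 2) * (3 * S1 ^ 2) := by ring
      exact le_of_mul_le_mul_left h' hpos
    rw [div_le_iff₀ h3pos]
    refine le_of_sq_le_sq' (by positivity) (by positivity) ?_
    calc ((2:ℝ) ^ n * Real.sqrt n) ^ 2 = ((2:ℝ) ^ n) ^ 2 * (n:ℝ) := by
          rw [mul_pow, hsq]
      _ ≤ 3 * S1 ^ 2 := hE
      _ = (S1 * Real.sqrt 3) ^ 2 := by rw [mul_pow, h3]; ring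
  · have h := sum_abs_Ysum_sq_le n
    have htarget : ((2:ℝ) ^ n * Real.sqrt n) ^ 2 = 2 ^ n * (2 ^ n * n) := by
      rw [mul_pow, hsq]; ring
    nlinarith [mul_nonneg h2n.le hsnn]

/-- For the two-point measure `μ = ½δ_a + ½δ_b` with `a ≠ b`:
`E[ρ_p^p(μ, μ̂_N)]^{1/p} = ‖a − b‖ · E[|μ̂_N({a}) − ½|]^{1/p}`, and consequently
`E[ρ_p^p(μ, μ̂_N)]^{1/p}` is of exact order `N^{−1/(2p)}`. -/
theorem two_point_measure_rate {d : ℕ} (p : ℝ) (hp : 1 ≤ p)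
    (a b : Fin d → ℝ) (hab : a ≠ b) :
    (∀ N : ℕ, 1 ≤ N →
      (expWpPow p ((2 : ℝ≥0∞)⁻¹ • (Measure.dirac a + Measure.dirac b)) N) ^ (1 / p)
        = (‖a - b‖₊ : ℝ≥0∞) *
          (∫⁻ x : Fin N → (Fin d → ℝ),
              ENNReal.ofReal |(empMeas N x {a}).toReal - 1 / 2|
            ∂(Measure.pi fun _ : Fin N =>
                (2 : ℝ≥0∞)⁻¹ • (Measure.dirac a + Measure.dirac b))) ^ (1 / p)) ∧
    ∃ c C : ℝ, 0 < c ∧ c ≤ C ∧ ∀ N : ℕ, 1 ≤ N →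
      ENNReal.ofReal (c * (N : ℝ) ^ (-(1 : ℝ) / (2 * p))) ≤
        (expWpPow p ((2 : ℝ≥0∞)⁻¹ • (Measure.dirac a + Measure.dirac b)) N) ^ (1 / p) ∧
      (expWpPow p ((2 : ℝ≥0∞)⁻¹ • (Measure.dirac a + Measure.dirac b)) N) ^ (1 / p) ≤
        ENNReal.ofReal (C * (N : ℝ) ^ (-(1 : ℝ) / (2 * p))) := by
  have hp0 : (0:ℝ) < p := lt_of_lt_of_le one_pos hp
  have hpne : p ≠ 0 := ne_of_gt hp0
  have hinv : (0:ℝ) ≤ 1 / p := by positivity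
  have hab' : a - b ≠ 0 := sub_ne_zero.mpr hab
  have hnorm0 : (0:ℝ) < ‖a - b‖ := norm_pos_iff.mpr hab'
  have hμ : ((2 : ℝ≥0∞)⁻¹ • (Measure.dirac a + Measure.dirac b)) = twoPt a b := rfl
  have key : ∀ N : ℕ, 1 ≤ N →
      (expWpPow p (twoPt a b) N) ^ (1 / p)
        = ENNReal.ofReal (‖a - b‖ * (RN N) ^ (1 / p)) := by
    intro N hN
    rw [expWpPow_eq a b p hab hp hN]
    rw [ENNReal.mul_rpow_of_nonneg _ _ hinv, ← ENNReal.rpow_mul,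
      mul_one_div_cancel hpne, ENNReal.rpow_one]
    rw [show (((2:ℝ) ^ N)⁻¹ * ∑ s : Fin N → Bool, |Ysum N s| / (2 * N)) = RN N from rfl]
    rw [ENNReal.ofReal_rpow_of_nonneg (RN_nonneg N) hinv,
      ENNReal.ofReal_mul (norm_nonneg _), ofReal_norm, enorm_eq_nnnorm]
  constructor
  · intro N hN
    rw [hμ, key N hN, integrand_eq a b hab hN]
    rw [show (((2:ℝ) ^ N)⁻¹ * ∑ s : Fin N → Bool, |Ysum N s| / (2 * N)) = RN N from rfl]
    rw [ENNReal.ofReal_rpow_of_nonneg (RN_nonneg N) hinv,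
      ENNReal.ofReal_mul (norm_nonneg _), ofReal_norm, enorm_eq_nnnorm]
  · refine ⟨‖a - b‖ * ((2 * Real.sqrt 3)⁻¹) ^ (1/p), ‖a - b‖ * ((2:ℝ)⁻¹) ^ (1/p),
      ?_, ?_, ?_⟩
    · exact mul_pos hnorm0 (Real.rpow_pos_of_pos (by positivity) _)
    · refine mul_le_mul_of_nonneg_left (Real.rpow_le_rpow (by positivity) ?_ hinv)
        (norm_nonneg _)
      have h13 : (1:ℝ) ≤ Real.sqrt 3 := by
        rw [show (1:ℝ) = Real.sqrt 1 from (Real.sqrt_one).symm]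
        exact Real.sqrt_le_sqrt (by norm_num)
      have : (2:ℝ) ≤ 2 * Real.sqrt 3 := by nlinarith
      exact inv_anti₀ (by norm_num) this
    · intro N hN
      have hN0 : (0:ℝ) < N := by exact_mod_cast hN
      have hbd := RN_bounds N hN (sum_abs_Ysum_bounds N hN)
      have hexp : ((N:ℝ) ^ (-(1:ℝ)/2)) ^ (1/p) = (N:ℝ) ^ (-(1:ℝ)/(2*p)) := by
        rw [← Real.rpow_mul hN0.le]
        congr 1
        field_simp
      have hNr0 : (0:ℝ) ≤ (N:ℝ) ^ (-(1:ℝ)/2) := Real.rpow_nonneg hN0.le _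
      rw [hμ, key N hN]
      constructor
      · apply ENNReal.ofReal_le_ofReal
        calc ‖a - b‖ * ((2 * Real.sqrt 3)⁻¹) ^ (1/p) * (N:ℝ) ^ (-(1:ℝ)/(2*p))
            = ‖a - b‖ * (((2 * Real.sqrt 3)⁻¹) ^ (1/p) * ((N:ℝ) ^ (-(1:ℝ)/2)) ^ (1/p)) := by
              rw [hexp]; ring
          _ = ‖a - b‖ * (((2 * Real.sqrt 3)⁻¹ * (N:ℝ) ^ (-(1:ℝ)/2)) ^ (1/p)) := by
              rw [Real.mul_rpow (by positivity) hNr0]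
          _ ≤ ‖a - b‖ * (RN N) ^ (1/p) :=
              mul_le_mul_of_nonneg_left
                (Real.rpow_le_rpow (by positivity) hbd.1 hinv) (norm_nonneg _)
      · apply ENNReal.ofReal_le_ofReal
        calc ‖a - b‖ * (RN N) ^ (1/p)
            ≤ ‖a - b‖ * ((2:ℝ)⁻¹ * (N:ℝ) ^ (-(1:ℝ)/2)) ^ (1/p) :=
              mul_le_mul_of_nonneg_left
                (Real.rpow_le_rpow (RN_nonneg N) hbd.2 hinv) (norm_nonneg _)
          _ = ‖a - b‖ * (((2:ℝ)⁻¹) ^ (1/p) * ((N:ℝ) ^ (-(1:ℝ)/2)) ^ (1/p)) := by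
              rw [Real.mul_rpow (by norm_num) hNr0]
          _ = ‖a - b‖ * ((2:ℝ)⁻¹) ^ (1/p) * (N:ℝ) ^ (-(1:ℝ)/(2*p)) := by
              rw [hexp]; ring
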